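/- Let v, θ : ℝ → ℝ be twice differentiable, g, b ∈ ℝ with g² + b² ≠ 0, and p, q : ℝ → ℝ satisfy the voltage subsystem ODE: (b p(x) - g q(x))/(g²+b²) + 2 v v' θ' + v² θ'' = 0 and the phase subsystem ODE: (g p(x) + b q(x))/(g²+b²) + v v'' - v² (θ')² = 0, for all x. Then: (i) d/dx[-v(x) v'(x)] = (g p(x) + b q(x))/(g²+b²) - ((v'(x))² + v(x)²(θ'(x))²), and (ii) d/dx[-v(x)² θ'(x)] = (b p(x) - g q(x))/(g²+b²). -/

import Mathlib

theorem subsystem_dissipation (v θ p q : ℝ → ℝ) (g b : ℝ) (hgb : g ^ 2 + b ^ 2 ≠ 0)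
    (hv : Differentiable ℝ v) (hv' : Differentiable ℝ (deriv v))
    (hθ : Differentiable ℝ θ) (hθ' : Differentiable ℝ (deriv θ))
    (hV : ∀ x, (b * p x - g * q x) / (g ^ 2 + b ^ 2)
          + 2 * v x * deriv v x * deriv θ x + (v x) ^ 2 * deriv (deriv θ) x = 0)
    (hP : ∀ x, (g * p x + b * q x) / (g ^ 2 + b ^ 2)
          + v x * deriv (deriv v) x - (v x) ^ 2 * (deriv θ x) ^ 2 = 0) :
    (∀ x, deriv (fun y => -(v y) * deriv v y) x
        = (g * p x + b * q x) / (g ^ 2 + b ^ 2)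
          - ((deriv v x) ^ 2 + (v x) ^ 2 * (deriv θ x) ^ 2)) ∧
    (∀ x, deriv (fun y => -(v y) ^ 2 * deriv θ y) x
        = (b * p x - g * q x) / (g ^ 2 + b ^ 2)) := by
  constructor
  · intro x
    have h1 : deriv (fun y => -(v y) * deriv v y) x
        = -(deriv v x * deriv v x + v x * deriv (deriv v) x) := by
      have : deriv (fun y => -(v y * deriv v y)) x = -deriv (fun y => v y * deriv v y) x := by
        simp [deriv.neg]
      simp only [neg_mul] at *
      rw [this, deriv_fun_mul (hv x) (hv' x)]
    rw [h1]
    nlinarith [hP x]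
  · intro x
    have h1 : deriv (fun y => -(v y) ^ 2 * deriv θ y) x
        = -(2 * v x * deriv v x * deriv θ x + v x ^ 2 * deriv (deriv θ) x) := by
      have e : (fun y => -(v y) ^ 2 * deriv θ y) = fun y => -(v y ^ 2 * deriv θ y) := by
        funext y; ring
      rw [e]
      rw [deriv.fun_neg]
      rw [deriv_fun_mul ((hv x).fun_pow 2) (hθ' x), deriv_fun_pow (hv x) 2]
      ring
    rw [h1]
    nlinarith [hV x]
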